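/- Suppose g = u₁^ℓ·t(u) and f = u₁^ℓ·s(u) for smooth functions s, t and an integer ℓ > 2, and suppose the pair satisfies e₀ − ∂e₁ = 0, where e₁ = ∂(f−ug)/∂u₁ − (5/2)u₁·∂g/∂u₂ and e₀ = ∂(f−ug)/∂u − (3/2)u₁·∂g/∂u₁ + (3/2)g. Then s(u) = u·t(u) for all u, and moreover g = 0. -/

import Mathlib

/-- Partial derivative `∂/∂u_k` of an observable on the jet space
(coordinates `z 0 = u`, `z k = u_k`). -/
noncomputable def pd (k : ℕ) (F : (ℕ → ℝ) → ℝ) : (ℕ → ℝ) → ℝ :=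
  fun z => deriv (fun s => F (Function.update z k s)) (z k)

/-- The total derivative `∂ = Σ_{j≥0} u_{j+1} ∂/∂u_j`. -/
noncomputable def TD (F : (ℕ → ℝ) → ℝ) : (ℕ → ℝ) → ℝ :=
  fun z => ∑ᶠ j : ℕ, z (j + 1) * pd j F z

/-- The variational derivative `δ_u = Σ_{k≥0} (−∂)^k ∘ ∂/∂u_k`. -/
noncomputable def VD (F : (ℕ → ℝ) → ℝ) : (ℕ → ℝ) → ℝ :=
  fun z => ∑ᶠ k : ℕ, (-1 : ℝ) ^ k * (TD^[k] (pd k F)) z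

lemma pd0_shape (φ : ℝ → ℝ) (hφ : Differentiable ℝ φ) (m : ℕ) (z : ℕ → ℝ) :
    pd 0 (fun w => w 1 ^ m * φ (w 0)) z = z 1 ^ m * deriv φ (z 0) := by
  unfold pd
  have h : (fun a => (Function.update z 0 a) 1 ^ m * φ ((Function.update z 0 a) 0))
      = fun a => z 1 ^ m * φ a := by
    funext a
    rw [Function.update_of_ne (by norm_num), Function.update_self]
  rw [h, deriv_const_mul _ (hφ.differentiableAt)]

lemma pd1_shape (φ : ℝ → ℝ) (m : ℕ) (z : ℕ → ℝ) :
    pd 1 (fun w => w 1 ^ m * φ (w 0)) z = m * z 1 ^ (m - 1) * φ (z 0) := by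
  unfold pd
  have h : (fun a => (Function.update z 1 a) 1 ^ m * φ ((Function.update z 1 a) 0))
      = fun a => a ^ m * φ (z 0) := by
    funext a
    rw [Function.update_self, Function.update_of_ne (by norm_num)]
  rw [h, deriv_mul_const (differentiableAt_pow m), deriv_pow_field]

lemma pdk_shape (φ : ℝ → ℝ) (m : ℕ) (k : ℕ) (hk : 2 ≤ k) (z : ℕ → ℝ) :
    pd k (fun w => w 1 ^ m * φ (w 0)) z = 0 := by
  unfold pd
  have h : (fun a => (Function.update z k a) 1 ^ m * φ ((Function.update z k a) 0))
      = fun _ => z 1 ^ m * φ (z 0) := by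
    funext a
    rw [Function.update_of_ne (by omega), Function.update_of_ne (by omega)]
  rw [h, deriv_const]

lemma TD_shape (φ : ℝ → ℝ) (hφ : Differentiable ℝ φ) (m : ℕ) (z : ℕ → ℝ) :
    TD (fun w => w 1 ^ m * φ (w 0)) z
      = z 1 * (z 1 ^ m * deriv φ (z 0)) + z 2 * (m * z 1 ^ (m - 1) * φ (z 0)) := by
  unfold TD
  have hsupp : Function.support
      (fun j => z (j + 1) * pd j (fun w => w 1 ^ m * φ (w 0)) z) ⊆ ({0, 1} : Finset ℕ) := by
    intro j hj
    simp only [Function.mem_support] at hj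
    by_contra hmem
    simp only [Finset.coe_insert, Finset.coe_singleton, Set.mem_insert_iff,
      Set.mem_singleton_iff] at hmem
    push_neg at hmem
    exact hj (by rw [pdk_shape φ m j (by omega) z]; ring)
  rw [finsum_eq_sum_of_support_subset _ hsupp]
  rw [Finset.sum_insert (by norm_num), Finset.sum_singleton]
  rw [pd0_shape φ hφ m z, pd1_shape φ m z]

theorem degree_ell_cocycle_vanishes (s t : ℝ → ℝ)
    (hs : ContDiff ℝ (⊤ : ℕ∞) s) (ht : ContDiff ℝ (⊤ : ℕ∞) t)
    (ℓ : ℕ) (hℓ : 2 < ℓ)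
    (f g e0 e1 : (ℕ → ℝ) → ℝ)
    (hf : f = fun z => z 1 ^ ℓ * s (z 0))
    (hg : g = fun z => z 1 ^ ℓ * t (z 0))
    (he1 : e1 = fun z => pd 1 (fun w => f w - w 0 * g w) z - (5 / 2) * z 1 * pd 2 g z)
    (he0 : e0 = fun z =>
      pd 0 (fun w => f w - w 0 * g w) z - (3 / 2) * z 1 * pd 1 g z + (3 / 2) * g z)
    (hS : ∀ z : ℕ → ℝ, e0 z - TD e1 z = 0) :
    (∀ u : ℝ, s u = u * t u) ∧ (∀ u : ℝ, t u = 0) ∧ (∀ z : ℕ → ℝ, g z = 0) := by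
  set ψ : ℝ → ℝ := fun u => s u - u * t u with hψ
  have hsd : Differentiable ℝ s := hs.differentiable (by simp)
  have htd : Differentiable ℝ t := ht.differentiable (by simp)
  have hψd : Differentiable ℝ ψ := hsd.sub (differentiable_id.mul htd)
  have hh : (fun w => f w - w 0 * g w) = fun w => w 1 ^ ℓ * ψ (w 0) := by
    funext w; rw [hf, hg]; simp only [hψ]; ring
  set φ1 : ℝ → ℝ := fun u => (ℓ : ℝ) * ψ u with hφ1
  have hφ1d : Differentiable ℝ φ1 := hψd.const_mul _
  have he1' : e1 = fun z => z 1 ^ (ℓ - 1) * φ1 (z 0) := by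
    funext z
    rw [he1]
    beta_reduce
    rw [hh, pd1_shape ψ ℓ z, hg, pdk_shape t ℓ 2 le_rfl z]
    show (ℓ : ℝ) * z 1 ^ (ℓ - 1) * ψ (z 0) - 5 / 2 * z 1 * 0 = z 1 ^ (ℓ - 1) * ((ℓ : ℝ) * ψ (z 0))
    ring
  have hL : (2 : ℝ) < (ℓ : ℝ) := by exact_mod_cast hℓ
  have hℓ1 : ((ℓ - 1 : ℕ) : ℝ) = (ℓ : ℝ) - 1 := by
    rw [Nat.cast_sub (by omega)]; norm_num
  have key : ∀ u c : ℝ,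
      deriv ψ u - (3/2) * ((ℓ : ℝ) * t u) + (3/2) * t u
        - (deriv φ1 u + c * (((ℓ : ℝ) - 1) * φ1 u)) = 0 := by
    intro u c
    set z : ℕ → ℝ := fun n => if n = 0 then u else if n = 1 then 1 else if n = 2 then c else 0
      with hz
    have hz0 : z 0 = u := rfl
    have hz1 : z 1 = 1 := rfl
    have hz2 : z 2 = c := rfl
    have hE := hS z
    rw [he0, he1'] at hE
    simp only at hE
    rw [hh, pd0_shape ψ hψd ℓ z, hg] at hE
    rw [pd1_shape t ℓ z] at hE
    rw [TD_shape φ1 hφ1d (ℓ - 1) z] at hE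
    simp only at hE
    rw [hz0, hz1, hz2, hℓ1] at hE
    simp only [one_pow, one_mul, mul_one] at hE
    linarith
  have hψ0 : ∀ u : ℝ, ψ u = 0 := by
    intro u
    have h0 := key u 0
    have h1 := key u 1
    have hB : ((ℓ : ℝ) - 1) * φ1 u = 0 := by linarith
    have hφ1u : φ1 u = (ℓ : ℝ) * ψ u := rfl
    rw [hφ1u] at hB
    rcases mul_eq_zero.mp hB with h | h
    · linarith
    · rcases mul_eq_zero.mp h with h' | h'
      · linarith
      · exact h'
  have hsu : ∀ u : ℝ, s u = u * t u := by
    intro u; have h := hψ0 u; simp only [hψ] at h; linarith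
  have hderiv0 : ∀ u : ℝ, deriv ψ u = 0 := by
    intro u
    have h : ψ = fun _ => (0 : ℝ) := funext hψ0
    rw [h, deriv_const]
  have ht0 : ∀ u : ℝ, t u = 0 := by
    intro u
    have h0 := key u 0
    have hdφ1 : deriv φ1 u = (ℓ : ℝ) * deriv ψ u := by
      rw [hφ1]; exact deriv_const_mul _ (hψd.differentiableAt)
    rw [hdφ1, hderiv0 u] at h0
    have h2 : ((ℓ : ℝ) - 1) * t u = 0 := by linarith
    rcases mul_eq_zero.mp h2 with h | h
    · linarith
    · exact h
  refine ⟨hsu, ht0, fun z => ?_⟩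
  rw [hg]; simp only [ht0, mul_zero]
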